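/- arXiv:math/9307224 — 2 statements merged into one kernel-verified Lean document; each statement's English description precedes it below -/
import Mathlib

section
/- Let 0 < μ < 1/2 and x ∈ ℂ. Then e^x = (1/B(1/2 − μ, μ)) ∫_{−1}^{1} e_{−μ}(x t) |t|^{−2μ} (1−t)^{μ−1} (1+t)^{μ} dt. -/
open MeasureTheory
open scoped BigOperators Nat

/-- Generalized factorial `γ_μ(n)`: `γ_μ(0) = 1`,
`γ_μ(n+1) = (n + 1 + 2μ θ_{n+1}) γ_μ(n)` where `θ_k = 1` if `k` is odd, `0` if even. -/
noncomputable def genGamma (μ : ℝ) : ℕ → ℝ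
  | 0 => 1
  | n + 1 => ((n : ℝ) + 1 + 2 * μ * (if (n + 1) % 2 = 1 then (1 : ℝ) else 0)) * genGamma μ n

/-- Generalized exponential function `e_μ(z) = Σ_{n≥0} z^n / γ_μ(n)`. -/
noncomputable def genExp (μ : ℝ) (z : ℂ) : ℂ :=
  ∑' n : ℕ, z ^ n / (genGamma μ n : ℂ)

/-- Generalized Hermite polynomial
`H_n^μ(x) = n! Σ_{k=0}^{⌊n/2⌋} (-1)^k (2x)^{n-2k} / (k! γ_μ(n-2k))`. -/
noncomputable def genHermite (μ : ℝ) (n : ℕ) (x : ℂ) : ℂ :=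
  (n ! : ℂ) * ∑ k ∈ Finset.range (n / 2 + 1),
    (-1) ^ k * (2 * x) ^ (n - 2 * k) / ((k ! : ℂ) * ((genGamma μ (n - 2 * k) : ℝ) : ℂ))

/-- Dunkl operator `(D_μ f)(x) = f'(x) + (μ/x)(f(x) - f(-x))`. -/
noncomputable def dunkl (μ : ℝ) (f : ℝ → ℂ) (x : ℝ) : ℂ :=
  deriv f x + ((μ / x : ℝ) : ℂ) * (f x - f (-x))

/-- Euler beta function `B(a,b) = Γ(a)Γ(b)/Γ(a+b)`. -/
noncomputable def realBeta (a b : ℝ) : ℝ :=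
  Real.Gamma a * Real.Gamma b / Real.Gamma (a + b)


section AuxProofs

open MeasureTheory intervalIntegral Set

lemma genGamma_succ (μ : ℝ) (n : ℕ) :
    genGamma μ (n+1) = ((n : ℝ) + 1 + 2 * μ * (if (n + 1) % 2 = 1 then (1:ℝ) else 0)) * genGamma μ n := rfl

lemma genGamma_even (μ : ℝ) (k : ℕ) :
    genGamma μ (2*k+2) = ((2*k:ℝ)+2) * genGamma μ (2*k+1) := by
  have h := genGamma_succ μ (2*k+1)
  have h2 : (2*k+1+1) % 2 = 0 := by omega
  rw [show 2*k+2 = 2*k+1+1 from rfl, h, h2]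
  norm_num
  left; skip; ring

lemma genGamma_odd (μ : ℝ) (k : ℕ) :
    genGamma μ (2*k+1) = ((2*k:ℝ)+1+2*μ) * genGamma μ (2*k) := by
  have h := genGamma_succ μ (2*k)
  have h2 : (2*k+1) % 2 = 1 := by omega
  rw [h, h2]
  norm_num

lemma genGamma_pos {μ : ℝ} (hμ1 : μ < 1/2) (hμ0 : 0 < μ) (n : ℕ) : 0 < genGamma (-μ) n := by
  induction n with
  | zero => norm_num [genGamma]
  | succ n ih =>
    rw [genGamma_succ]
    refine mul_pos ?_ ih
    have := Nat.cast_nonneg (α := ℝ) n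
    split_ifs <;> nlinarith

lemma genGamma_ge {μ : ℝ} (hμ1 : μ < 1/2) (hμ0 : 0 < μ) (n : ℕ) :
    (1-2*μ)^n * n ! ≤ genGamma (-μ) n := by
  induction n with
  | zero => norm_num [genGamma]
  | succ n ih =>
    rw [genGamma_succ, pow_succ]
    have h1 : (0:ℝ) < 1 - 2*μ := by linarith
    have hn := Nat.cast_nonneg (α := ℝ) n
    have h2 : (1-2*μ) * ((n:ℝ)+1) ≤ (n : ℝ) + 1 + 2 * (-μ) * (if (n + 1) % 2 = 1 then (1:ℝ) else 0) := by
      split_ifs <;> nlinarith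
    calc (1-2*μ)^n * (1-2*μ) * ((n+1)! : ℝ)
        = ((1-2*μ) * ((n:ℝ)+1)) * ((1-2*μ)^n * (n ! : ℝ)) := by
          rw [Nat.factorial_succ]; push_cast; ring
      _ ≤ ((n : ℝ) + 1 + 2 * (-μ) * (if (n + 1) % 2 = 1 then (1:ℝ) else 0)) * genGamma (-μ) n := by
          refine mul_le_mul h2 ih (by positivity) ?_
          split_ifs at h2 ⊢ <;> nlinarith

lemma contOn_rpow_one_sub {q : ℝ} {s : Set ℝ} (hs : ∀ t ∈ s, t < 1) :
    ContinuousOn (fun t : ℝ => (1-t)^q) s :=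
  (continuousOn_const.sub continuousOn_id).rpow_const
    fun t ht => Or.inl (by have := hs t ht; intro h; simp at h; linarith [h])

lemma contOn_rpow_one_add {q : ℝ} {s : Set ℝ} (hs : ∀ t ∈ s, -1 < t) :
    ContinuousOn (fun t : ℝ => (1+t)^q) s :=
  (continuousOn_const.add continuousOn_id).rpow_const
    fun t ht => Or.inl (by have := hs t ht; intro h; simp at h; linarith [h])

/-- Beta-type integrability with a continuous extra factor. -/
lemma II {p q : ℝ} (hp : -1 < p) (hq : -1 < q) {h : ℝ → ℝ}
    (hh : ContinuousOn h (Icc 0 1)) :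
    IntervalIntegrable (fun t => t^p * (1-t)^q * h t) volume 0 1 := by
  have huIcc : Set.uIcc (0:ℝ) (1/2) = Icc 0 (1/2) := uIcc_of_le (by norm_num)
  have huIcc2 : Set.uIcc (1/2:ℝ) 1 = Icc (1/2) 1 := uIcc_of_le (by norm_num)
  have A : IntervalIntegrable (fun t => t^p * ((1-t)^q * h t)) volume 0 (1/2) := by
    refine (intervalIntegrable_rpow' hp).mul_continuousOn ?_
    rw [huIcc]
    exact (contOn_rpow_one_sub (fun t ht => by linarith [ht.2, ht.1])).mul
      (hh.mono (Icc_subset_Icc le_rfl (by norm_num)))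
  have A' : IntervalIntegrable (fun t => t^p * (1-t)^q * h t) volume 0 (1/2) := by
    refine A.congr_ae ?_
    refine Filter.EventuallyEq.restrict (.of_eq ?_)
    funext t; ring
  have B0 : IntervalIntegrable (fun t : ℝ => (1-t)^q) volume (1/2) 1 := by
    have := (intervalIntegrable_rpow' hq (a := (1/2:ℝ)) (b := 0)).comp_sub_left 1
    norm_num at this
    exact this
  have B : IntervalIntegrable (fun t => (1-t)^q * (t^p * h t)) volume (1/2) 1 := by
    refine B0.mul_continuousOn ?_
    rw [huIcc2]
    refine ContinuousOn.mul ?_ (hh.mono (Icc_subset_Icc (by norm_num) le_rfl))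
    exact continuousOn_id.rpow_const fun t ht => Or.inl (ne_of_gt (lt_of_lt_of_le (by norm_num) ht.1))
  have B' : IntervalIntegrable (fun t => t^p * (1-t)^q * h t) volume (1/2) 1 := by
    refine B.congr_ae ?_
    refine Filter.EventuallyEq.restrict (.of_eq ?_)
    funext t; ring
  exact A'.trans B'

lemma realBeta_pos {a b : ℝ} (ha : 0 < a) (hb : 0 < b) : 0 < realBeta a b := by
  unfold realBeta
  have := Real.Gamma_pos_of_pos ha
  have := Real.Gamma_pos_of_pos hb
  have := Real.Gamma_pos_of_pos (by linarith : (0:ℝ) < a + b)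
  positivity

lemma integral_realBeta {a b : ℝ} (ha : 0 < a) (hb : 0 < b) :
    ∫ t in (0:ℝ)..1, t^(a-1) * (1-t)^(b-1) = realBeta a b := by
  have key : Complex.betaIntegral a b = ((realBeta a b : ℝ) : ℂ) := by
    have h := Complex.Gamma_mul_Gamma_eq_betaIntegral
      (s := (a:ℂ)) (t := (b:ℂ)) (by simpa using ha) (by simpa using hb)
    have hab : Complex.Gamma ((a:ℂ) + b) ≠ 0 := by
      rw [show ((a:ℂ) + b) = ((a+b : ℝ) : ℂ) by push_cast; ring, Complex.Gamma_ofReal]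
      exact_mod_cast (Real.Gamma_pos_of_pos (by linarith : (0:ℝ) < a+b)).ne'
    rw [show ((a:ℂ) + b) = ((a+b : ℝ) : ℂ) by push_cast; ring] at h
    rw [realBeta, Complex.ofReal_div, Complex.ofReal_mul, ← Complex.Gamma_ofReal,
      ← Complex.Gamma_ofReal, ← Complex.Gamma_ofReal]
    rw [show ((a:ℂ) + b) = ((a+b : ℝ) : ℂ) by push_cast; ring] at hab
    rw [eq_div_iff hab]
    linear_combination -h
  have cast_eq : (∫ t in (0:ℝ)..1, ((t^(a-1) * (1-t)^(b-1) : ℝ) : ℂ)) = Complex.betaIntegral a b := by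
    rw [Complex.betaIntegral]
    refine intervalIntegral.integral_congr fun t ht => ?_
    rw [Set.uIcc_of_le (by norm_num : (0:ℝ) ≤ 1)] at ht
    push_cast
    rw [Complex.ofReal_cpow ht.1, Complex.ofReal_cpow (by linarith [ht.2] : (0:ℝ) ≤ 1 - t)]
    push_cast
    ring
  rw [intervalIntegral.integral_ofReal, key] at cast_eq
  exact_mod_cast cast_eq

lemma J_eq {a b : ℝ} (ha : 0 < a) (hb : 0 < b) :
    ∫ t in (0:ℝ)..1, t^(2*a-1) * (1-t)^(b-1) * (1+t)^(b-1) = realBeta a b / 2 := by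
  set g : ℝ → ℝ := fun u => u^(a-1) * (1-u)^(b-1) with hg
  have h01 : (0:ℝ) ≤ 1 := by norm_num
  have hgInt : IntervalIntegrable g volume 0 1 := by
    simpa [hg] using II (by linarith) (by linarith) (continuousOn_const (c := (1:ℝ)))
  have heq : ∀ t ∈ Ioc (0:ℝ) 1, (2*t) • g (t^2)
      = 2 * (t^(2*a-1) * (1-t)^(b-1) * (1+t)^(b-1)) := by
    intro t ht
    have ht0 : 0 < t := ht.1
    have ht1 : t ≤ 1 := ht.2
    have h1 : ((t^2 : ℝ))^(a-1) = t^(2*(a-1)) := by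
      rw [← Real.rpow_natCast t 2, ← Real.rpow_mul ht0.le]
      norm_num
    have h2 : ((1 - t^2 : ℝ))^(b-1) = (1-t)^(b-1) * (1+t)^(b-1) := by
      rw [show (1 - t^2 : ℝ) = (1-t)*(1+t) by ring, Real.mul_rpow (by linarith) (by linarith)]
    have h3 : t^(2*a-1) = t^(2*(a-1)) * t := by
      rw [← Real.rpow_add_one ht0.ne']
      ring_nf
    rw [smul_eq_mul, hg]
    simp only
    rw [h1, h2, h3]
    ring
  have hInt2 : IntervalIntegrable (fun t => 2 * (t^(2*a-1) * (1-t)^(b-1) * (1+t)^(b-1))) volume 0 1 :=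
    (II (by linarith) (by linarith)
      (contOn_rpow_one_add (fun t ht => by linarith [ht.1]))).const_mul 2
  have himage : ((fun t : ℝ => t^2) '' (Set.uIcc 0 1)) ⊆ Icc 0 1 := by
    rw [uIcc_of_le h01]
    rintro _ ⟨t, ht, rfl⟩
    simp only
    constructor
    · positivity
    · nlinarith [ht.1, ht.2]
  have hcont : ContinuousOn g ((fun t : ℝ => t^2) '' Ioo (min 0 1) (max 0 1)) := by
    have himg2 : ((fun t : ℝ => t^2) '' Ioo (min 0 1) (max 0 1)) ⊆ Ioo 0 1 := by
      rw [show min (0:ℝ) 1 = 0 by norm_num, show max (0:ℝ) 1 = 1 by norm_num]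
      rintro _ ⟨t, ht, rfl⟩
      simp only
      constructor
      · nlinarith [ht.1, ht.2]
      · nlinarith [ht.1, ht.2]
    refine ContinuousOn.mono ?_ himg2
    exact (continuousOn_id.rpow_const fun t ht => Or.inl (ne_of_gt ht.1)).mul
      (contOn_rpow_one_sub fun t ht => ht.2)
  have hg1 : IntegrableOn g ((fun t : ℝ => t^2) '' (Set.uIcc 0 1)) volume :=
    ((intervalIntegrable_iff_integrableOn_Icc_of_le h01).mp hgInt).mono_set himage
  have h0ae : ∀ᵐ (t:ℝ) ∂volume, t ≠ 0 := by
    rw [ae_iff]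
    push_neg
    simpa using measure_singleton (0:ℝ)
  have hg2 : IntegrableOn (fun x => (2*x) • (g ∘ fun t : ℝ => t^2) x) (Set.uIcc 0 1) volume := by
    rw [uIcc_of_le h01]
    have base := (intervalIntegrable_iff_integrableOn_Icc_of_le h01).mp hInt2
    refine MeasureTheory.IntegrableOn.congr_fun_ae base ?_
    filter_upwards [ae_restrict_of_ae h0ae, ae_restrict_mem measurableSet_Icc] with t ht0 htm
    exact (heq t ⟨lt_of_le_of_ne htm.1 (Ne.symm ht0), htm.2⟩).symm
  have key := integral_comp_smul_deriv''' (a := (0:ℝ)) (b := 1)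
    (f := fun t => t^2) (f' := fun t => 2*t) (g := g)
    (by fun_prop)
    (fun x hx => by simpa [two_mul] using (hasDerivAt_pow 2 x).hasDerivWithinAt)
    hcont hg1 hg2
  rw [show ((0:ℝ)^2 : ℝ) = 0 by norm_num, show ((1:ℝ)^2 : ℝ) = 1 by norm_num] at key
  have hb2 : ∫ u in (0:ℝ)..1, g u = realBeta a b := integral_realBeta ha hb
  have hcg : (∫ t in (0:ℝ)..1, (2*t) • (g ∘ fun s : ℝ => s^2) t)
      = ∫ t in (0:ℝ)..1, 2 * (t^(2*a-1) * (1-t)^(b-1) * (1+t)^(b-1)) := by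
    refine intervalIntegral.integral_congr_ae (MeasureTheory.ae_of_all _ fun t ht => ?_)
    rw [uIoc_of_le h01] at ht
    exact heq t ht
  rw [hcg, hb2, intervalIntegral.integral_const_mul] at key
  linarith [key]

lemma realBeta_succ {a b : ℝ} (ha : 0 < a) (hb : 0 < b) :
    realBeta (a+1) b = (a/(a+b)) * realBeta a b := by
  unfold realBeta
  have hab : (0:ℝ) < a + b := by linarith
  rw [Real.Gamma_add_one ha.ne', show a+1+b = (a+b)+1 by ring,
    Real.Gamma_add_one hab.ne']
  have h1 := (Real.Gamma_pos_of_pos hab).ne'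
  field_simp

lemma beta_gen {mu : Real} (hm0 : 0 < mu) (hm1 : mu < 1/2) (k : Nat) :
    realBeta ((k:Real)+1/2-mu) mu = realBeta (1/2-mu) mu * genGamma (-mu) (2*k) / (2*k)! /\
    realBeta ((k:Real)+3/2-mu) mu = realBeta (1/2-mu) mu * genGamma (-mu) (2*k+1) / (2*k+1)! := by
  induction k with
  | zero =>
    constructor
    · norm_num [genGamma] <;> ring
    · have h := realBeta_succ (a := 1/2-mu) (b := mu) (by linarith) hm0
      rw [show ((0:Nat):Real)+3/2-mu = (1/2-mu)+1 by push_cast; ring, h]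
      have hg1 : genGamma (-mu) 1 = 1 - 2*mu := by norm_num [genGamma] <;> ring
      simp only [Nat.mul_zero, Nat.zero_add]
      rw [hg1, show (1/2-mu+mu : Real) = 1/2 by ring]
      norm_num [Nat.factorial]
      ring
  | succ k ih =>
    obtain ⟨h1, h2⟩ := ih
    have hk0 : (0:Real) ≤ (k:Real) := Nat.cast_nonneg k
    have hfac1 : ((2*k+1)! : Real) ≠ 0 := by positivity
    have hidx : 2*(k+1) = 2*k+2 := by ring
    have hidx2 : 2*(k+1)+1 = 2*k+3 := by ring
    have f2 : ((2*k+2)! : Real) = (2*(k:Real)+2) * (2*k+1)! := by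
      rw [show 2*k+2 = (2*k+1)+1 by ring, Nat.factorial_succ]; push_cast; ring
    have f3 : ((2*k+3)! : Real) = (2*(k:Real)+3) * ((2*(k:Real)+2) * (2*k+1)!) := by
      rw [show 2*k+3 = (2*k+2)+1 by ring, Nat.factorial_succ, show 2*k+2 = (2*k+1)+1 by ring,
        Nat.factorial_succ]
      push_cast; ring
    have e1 := genGamma_odd (-mu) (k+1)
    rw [hidx] at e1
    push_cast at e1
    rw [show 2*k+2+1 = 2*k+3 by ring] at e1
    constructor
    · rw [show ((k+1:Nat):Real)+1/2-mu = (k:Real)+3/2-mu by push_cast; ring, h2]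
      rw [hidx, genGamma_even, f2]
      push_cast
      field_simp
    · rw [show ((k+1:Nat):Real)+3/2-mu = ((k:Real)+3/2-mu)+1 by push_cast; ring]
      have hpos : (0:Real) < (k:Real)+3/2-mu := by linarith
      rw [realBeta_succ hpos hm0, h2, hidx2, e1, genGamma_even, f3,
        show (k:Real)+3/2-mu+mu = (k:Real)+3/2 by ring]
      have hne2 : (k:Real)+3/2 ≠ 0 := by positivity
      field_simp
      ring

lemma moment {μ : ℝ} (hμ0 : 0 < μ) (hμ1 : μ < 1/2) (n : ℕ) :
    (∫ t in (-1:ℝ)..1, (t:ℝ)^n * (|t|^(-(2*μ)) * (1-t)^(μ-1) * (1+t)^μ))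
      = realBeta (1/2-μ) μ * genGamma (-μ) n / n ! := by
  have h01 : (0:ℝ) ≤ 1 := by norm_num
  set F : ℝ → ℝ := fun t => (t:ℝ)^n * (|t|^(-(2*μ)) * (1-t)^(μ-1) * (1+t)^μ) with hF
  have hc : (-1:ℝ) < (n:ℝ) - 2*μ := by
    have : (0:ℝ) ≤ (n:ℝ) := Nat.cast_nonneg n
    linarith
  set A : ℝ → ℝ := fun t => t^((n:ℝ)-2*μ) * (1-t)^(μ-1) * (1+t)^μ with hAdef
  set B : ℝ → ℝ := fun t => t^((n:ℝ)-2*μ) * (1-t)^μ * (1+t)^(μ-1) with hBdef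
  have hA : IntervalIntegrable A volume 0 1 :=
    II hc (by linarith) (contOn_rpow_one_add fun t ht => by linarith [ht.1])
  have hB : IntervalIntegrable B volume 0 1 :=
    II hc (by linarith) (contOn_rpow_one_add fun t ht => by linarith [ht.1])
  have eqplus : ∀ t ∈ Ioc (0:ℝ) 1, F t = A t := by
    intro t ht
    rw [hF, hAdef]
    simp only
    rw [abs_of_pos ht.1, ← Real.rpow_natCast t n, mul_assoc, ← mul_assoc (t ^ (n:ℝ)),
      ← Real.rpow_add ht.1, show (n:ℝ) + -(2*μ) = (n:ℝ)-2*μ by ring]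
    ring
  have eqminus : ∀ t ∈ Ioc (0:ℝ) 1, F (-t) = (-1:ℝ)^n * B t := by
    intro t ht
    rw [hF, hBdef]
    simp only
    rw [show (1:ℝ) - -t = 1 + t by ring, show (1:ℝ) + -t = 1 - t by ring, abs_neg,
      abs_of_pos ht.1, neg_pow, ← Real.rpow_natCast t n, mul_assoc ((-1:ℝ)^n), mul_assoc,
      ← mul_assoc (t ^ (n:ℝ)), ← Real.rpow_add ht.1, show (n:ℝ) + -(2*μ) = (n:ℝ)-2*μ by ring]
    ring
  have aeIoc : ∀ {f g : ℝ → ℝ}, (∀ t ∈ Ioc (0:ℝ) 1, f t = g t) →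
      f =ᵐ[volume.restrict (Set.uIoc (0:ℝ) 1)] g := by
    intro f g h
    rw [uIoc_of_le h01]
    filter_upwards [ae_restrict_mem measurableSet_Ioc] with t ht using h t ht
  have hFplus : IntervalIntegrable F volume 0 1 :=
    hA.congr_ae (aeIoc fun t ht => (eqplus t ht).symm)
  have hFminus : IntervalIntegrable (fun t => F (-t)) volume 0 1 :=
    (hB.const_mul ((-1:ℝ)^n)).congr_ae (aeIoc fun t ht => (eqminus t ht).symm)
  have hFneg : IntervalIntegrable F volume (-1) 0 := by
    have h := (hFminus.comp_sub_left 0).symm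
    norm_num at h
    refine h.congr_ae ?_
    refine Filter.EventuallyEq.restrict (.of_eq ?_)
    funext t
    norm_num
  have hsplit := intervalIntegral.integral_add_adjacent_intervals hFneg hFplus
  have hneg : (∫ t in (-1:ℝ)..0, F t) = ∫ t in (0:ℝ)..1, F (-t) := by
    rw [intervalIntegral.integral_comp_neg fun t => F t]
    norm_num
  have congrIoc : ∀ {f g : ℝ → ℝ}, (∀ t ∈ Ioc (0:ℝ) 1, f t = g t) →
      (∫ t in (0:ℝ)..1, f t) = ∫ t in (0:ℝ)..1, g t := fun h =>
    intervalIntegral.integral_congr_ae (MeasureTheory.ae_of_all _ fun t ht =>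
      h t (by rwa [uIoc_of_le h01] at ht))
  have hplusval : (∫ t in (0:ℝ)..1, F t) = ∫ t in (0:ℝ)..1, A t := congrIoc eqplus
  have hminusval : (∫ t in (0:ℝ)..1, F (-t)) = (-1:ℝ)^n * ∫ t in (0:ℝ)..1, B t := by
    rw [← intervalIntegral.integral_const_mul]
    exact congrIoc eqminus
  have main : (∫ t in (-1:ℝ)..1, F t)
      = (∫ t in (0:ℝ)..1, A t) + (-1:ℝ)^n * ∫ t in (0:ℝ)..1, B t := by
    rw [← hsplit, hneg, hminusval, hplusval]
    ring
  -- pointwise combination identities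
  have hne1 : μ - 1 ≠ 0 := by linarith
  have hne0 : μ ≠ 0 := hμ0.ne'
  have hAB_add : ∀ t ∈ Ioc (0:ℝ) 1,
      A t + B t = 2 * (t^((n:ℝ)-2*μ) * (1-t)^(μ-1) * (1+t)^(μ-1)) := by
    intro t ht
    rcases eq_or_lt_of_le ht.2 with h1 | h1
    · subst h1
      rw [hAdef, hBdef]
      simp only
      rw [sub_self, Real.zero_rpow hne1, Real.zero_rpow hne0]
      ring
    · have e1 : (1+t)^μ = (1+t)^(μ-1) * (1+t) := by
        have := Real.rpow_add_one (x := 1+t) (by linarith [ht.1] : (1:ℝ)+t ≠ 0) (μ-1)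
        rwa [show μ-1+1 = μ by ring] at this
      have e2 : (1-t)^μ = (1-t)^(μ-1) * (1-t) := by
        have := Real.rpow_add_one (x := 1-t) (by linarith : (1:ℝ)-t ≠ 0) (μ-1)
        rwa [show μ-1+1 = μ by ring] at this
      rw [hAdef, hBdef]
      simp only
      rw [e1, e2]
      ring
  have hAB_sub : ∀ t ∈ Ioc (0:ℝ) 1,
      A t - B t = 2 * (t^((n:ℝ)-2*μ+1) * (1-t)^(μ-1) * (1+t)^(μ-1)) := by
    intro t ht
    have e3 : t^((n:ℝ)-2*μ+1) = t^((n:ℝ)-2*μ) * t :=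
      Real.rpow_add_one ht.1.ne' _
    rcases eq_or_lt_of_le ht.2 with h1 | h1
    · subst h1
      rw [hAdef, hBdef]
      simp only
      rw [sub_self, Real.zero_rpow hne1, Real.zero_rpow hne0, e3]
      ring
    · have e1 : (1+t)^μ = (1+t)^(μ-1) * (1+t) := by
        have := Real.rpow_add_one (x := 1+t) (by linarith [ht.1] : (1:ℝ)+t ≠ 0) (μ-1)
        rwa [show μ-1+1 = μ by ring] at this
      have e2 : (1-t)^μ = (1-t)^(μ-1) * (1-t) := by
        have := Real.rpow_add_one (x := 1-t) (by linarith : (1:ℝ)-t ≠ 0) (μ-1)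
        rwa [show μ-1+1 = μ by ring] at this
      rw [hAdef, hBdef]
      simp only
      rw [e1, e2, e3]
      ring
  rcases Nat.even_or_odd n with he | ho
  · -- even case
    obtain ⟨k, rfl⟩ := he
    have hnk : k + k = 2 * k := by ring
    rw [main, Even.neg_one_pow ⟨k, rfl⟩, one_mul]
    have hsum : (∫ t in (0:ℝ)..1, A t) + (∫ t in (0:ℝ)..1, B t)
        = ∫ t in (0:ℝ)..1, 2 * (t^(((k+k:ℕ):ℝ)-2*μ) * (1-t)^(μ-1) * (1+t)^(μ-1)) := by
      rw [← intervalIntegral.integral_add hA hB]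
      exact congrIoc hAB_add
    rw [hsum]
    have ha : (0:ℝ) < (((k+k:ℕ):ℝ)-2*μ+1)/2 := by
      have : (0:ℝ) ≤ ((k+k:ℕ):ℝ) := Nat.cast_nonneg _
      linarith
    have hJ := J_eq ha hμ0
    rw [show 2*((((k+k:ℕ):ℝ)-2*μ+1)/2)-1 = ((k+k:ℕ):ℝ)-2*μ by ring] at hJ
    rw [intervalIntegral.integral_const_mul, hJ]
    have hbg := (beta_gen hμ0 hμ1 k).1
    rw [show (((k+k:ℕ):ℝ)-2*μ+1)/2 = (k:ℝ)+1/2-μ by push_cast; ring, hbg, hnk]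
    ring
  · -- odd case
    obtain ⟨k, rfl⟩ := ho
    rw [main, Odd.neg_one_pow ⟨k, rfl⟩]
    have hsum : (∫ t in (0:ℝ)..1, A t) + (-1) * (∫ t in (0:ℝ)..1, B t)
        = ∫ t in (0:ℝ)..1, 2 * (t^(((2*k+1:ℕ):ℝ)-2*μ+1) * (1-t)^(μ-1) * (1+t)^(μ-1)) := by
      rw [neg_one_mul, ← sub_eq_add_neg, ← intervalIntegral.integral_sub hA hB]
      exact congrIoc hAB_sub
    rw [hsum]
    have ha : (0:ℝ) < (((2*k+1:ℕ):ℝ)-2*μ+2)/2 := by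
      have : (0:ℝ) ≤ ((2*k+1:ℕ):ℝ) := Nat.cast_nonneg _
      linarith
    have hJ := J_eq ha hμ0
    rw [show 2*((((2*k+1:ℕ):ℝ)-2*μ+2)/2)-1 = ((2*k+1:ℕ):ℝ)-2*μ+1 by ring] at hJ
    rw [intervalIntegral.integral_const_mul, hJ]
    have hbg := (beta_gen hμ0 hμ1 k).2
    rw [show (((2*k+1:ℕ):ℝ)-2*μ+2)/2 = (k:ℝ)+3/2-μ by push_cast; ring, hbg]
    ring

lemma momentInt {μ : ℝ} (hμ0 : 0 < μ) (hμ1 : μ < 1/2) (n : ℕ) :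
    IntervalIntegrable (fun t => (t:ℝ)^n * (|t|^(-(2*μ)) * (1-t)^(μ-1) * (1+t)^μ)) volume (-1) 1 := by
  have h01 : (0:ℝ) ≤ 1 := by norm_num
  set F : ℝ → ℝ := fun t => (t:ℝ)^n * (|t|^(-(2*μ)) * (1-t)^(μ-1) * (1+t)^μ) with hF
  have hc : (-1:ℝ) < (n:ℝ) - 2*μ := by
    have : (0:ℝ) ≤ (n:ℝ) := Nat.cast_nonneg n
    linarith
  set A : ℝ → ℝ := fun t => t^((n:ℝ)-2*μ) * (1-t)^(μ-1) * (1+t)^μ with hAdef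
  set B : ℝ → ℝ := fun t => t^((n:ℝ)-2*μ) * (1-t)^μ * (1+t)^(μ-1) with hBdef
  have hA : IntervalIntegrable A volume 0 1 :=
    II hc (by linarith) (contOn_rpow_one_add fun t ht => by linarith [ht.1])
  have hB : IntervalIntegrable B volume 0 1 :=
    II hc (by linarith) (contOn_rpow_one_add fun t ht => by linarith [ht.1])
  have eqplus : ∀ t ∈ Set.Ioc (0:ℝ) 1, F t = A t := by
    intro t ht
    rw [hF, hAdef]
    simp only
    rw [abs_of_pos ht.1, ← Real.rpow_natCast t n, mul_assoc, ← mul_assoc (t ^ (n:ℝ)),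
      ← Real.rpow_add ht.1, show (n:ℝ) + -(2*μ) = (n:ℝ)-2*μ by ring]
    ring
  have eqminus : ∀ t ∈ Set.Ioc (0:ℝ) 1, F (-t) = (-1:ℝ)^n * B t := by
    intro t ht
    rw [hF, hBdef]
    simp only
    rw [show (1:ℝ) - -t = 1 + t by ring, show (1:ℝ) + -t = 1 - t by ring, abs_neg,
      abs_of_pos ht.1, neg_pow, ← Real.rpow_natCast t n, mul_assoc ((-1:ℝ)^n), mul_assoc,
      ← mul_assoc (t ^ (n:ℝ)), ← Real.rpow_add ht.1, show (n:ℝ) + -(2*μ) = (n:ℝ)-2*μ by ring]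
    ring
  have aeIoc : ∀ {f g : ℝ → ℝ}, (∀ t ∈ Set.Ioc (0:ℝ) 1, f t = g t) →
      f =ᵐ[volume.restrict (Set.uIoc (0:ℝ) 1)] g := by
    intro f g h
    rw [Set.uIoc_of_le h01]
    filter_upwards [ae_restrict_mem measurableSet_Ioc] with t ht using h t ht
  have hFplus : IntervalIntegrable F volume 0 1 :=
    hA.congr_ae (aeIoc fun t ht => (eqplus t ht).symm)
  have hFminus : IntervalIntegrable (fun t => F (-t)) volume 0 1 :=
    (hB.const_mul ((-1:ℝ)^n)).congr_ae (aeIoc fun t ht => (eqminus t ht).symm)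
  have hFneg : IntervalIntegrable F volume (-1) 0 := by
    have h := (hFminus.comp_sub_left 0).symm
    norm_num at h
    refine h.congr_ae ?_
    refine Filter.EventuallyEq.restrict (.of_eq ?_)
    funext t
    norm_num
  exact hFneg.trans hFplus


end AuxProofs

open MeasureTheory intervalIntegral Set in
/-- For `0 < μ < 1/2` and `x ∈ ℂ`:
`e^x = (1/B(1/2-μ, μ)) ∫_{-1}^1 e_{-μ}(xt) |t|^{-2μ} (1-t)^{μ-1} (1+t)^μ dt`. -/
theorem exp_eq_genExp_neg_integral (μ : ℝ) (hμ0 : 0 < μ) (hμ1 : μ < 1/2) (x : ℂ) :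
    Complex.exp x =
      ((1 / realBeta (1/2 - μ) μ : ℝ) : ℂ) *
        ∫ t in (-1 : ℝ)..1,
          genExp (-μ) (x * t) * ((|t| ^ (-(2 * μ)) * (1 - t) ^ (μ - 1) * (1 + t) ^ μ : ℝ) : ℂ) := by
  have hm11 : (-1:ℝ) ≤ 1 := by norm_num
  set Bv : ℝ := realBeta (1/2-μ) μ with hBv
  have hBvpos : 0 < Bv := realBeta_pos (by linarith) hμ0
  set w : ℝ → ℝ := fun t => |t| ^ (-(2 * μ)) * (1 - t) ^ (μ - 1) * (1 + t) ^ μ with hw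
  set fn : ℕ → ℝ → ℝ := fun n t => (t:ℝ)^n * w t with hfn
  set g : ℕ → ℝ → ℂ := fun n t => x^n / (genGamma (-μ) n : ℂ) * ((fn n t : ℝ) : ℂ) with hgdef
  have hγpos : ∀ n, 0 < genGamma (-μ) n := genGamma_pos hμ1 hμ0
  have hγne : ∀ n, ((genGamma (-μ) n : ℝ) : ℂ) ≠ 0 := fun n => by
    exact_mod_cast (hγpos n).ne'
  -- pointwise tsum identity
  have hpt : ∀ t : ℝ, genExp (-μ) (x * t) * ((w t : ℝ) : ℂ) = ∑' n, g n t := by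
    intro t
    rw [genExp, ← tsum_mul_right]
    congr 1
    funext n
    rw [hgdef]
    simp only [hfn]
    push_cast
    ring
  -- integrability of each g n on Ioc (-1) 1
  have hInt : ∀ n, Integrable (g n) (volume.restrict (Ioc (-1:ℝ) 1)) := by
    intro n
    have h1 : IntegrableOn (fn n) (Ioc (-1:ℝ) 1) volume :=
      (intervalIntegrable_iff_integrableOn_Ioc_of_le hm11).mp (momentInt hμ0 hμ1 n)
    exact (h1.ofReal.const_mul _)
  -- w is integrable and its integral is Bv
  have hwInt : IntegrableOn w (Ioc (-1:ℝ) 1) volume := by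
    have := (intervalIntegrable_iff_integrableOn_Ioc_of_le hm11).mp (momentInt hμ0 hμ1 0)
    simpa [hfn] using this
  have hwint_val : (∫ t in Ioc (-1:ℝ) 1, w t) = Bv := by
    have h0 := moment hμ0 hμ1 0
    rw [intervalIntegral.integral_of_le hm11] at h0
    rw [hw, hBv]
    simpa [genGamma] using h0
  have hwnonneg : ∀ t ∈ Ioc (-1:ℝ) 1, 0 ≤ w t := by
    intro t ht
    rw [hw]
    have h1 : (0:ℝ) ≤ 1 - t := by linarith [ht.2]
    have h2 : (0:ℝ) ≤ 1 + t := by linarith [ht.1]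
    have := Real.rpow_nonneg (abs_nonneg t) (-(2*μ))
    have := Real.rpow_nonneg h1 (μ-1)
    have := Real.rpow_nonneg h2 μ
    positivity
  -- norm bound
  have hnorm : ∀ n, (∫ t in Ioc (-1:ℝ) 1, ‖g n t‖)
      ≤ (‖x‖^n / genGamma (-μ) n) * Bv := by
    intro n
    have heq : ∀ t : ℝ, ‖g n t‖ = (‖x‖^n / genGamma (-μ) n) * |fn n t| := by
      intro t
      rw [hgdef]
      simp only
      rw [norm_mul, norm_div, norm_pow, Complex.norm_real, Complex.norm_real,
        Real.norm_eq_abs, Real.norm_eq_abs, abs_of_pos (hγpos n)]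
    calc (∫ t in Ioc (-1:ℝ) 1, ‖g n t‖)
        = (‖x‖^n / genGamma (-μ) n) * ∫ t in Ioc (-1:ℝ) 1, |fn n t| := by
          simp_rw [heq]
          rw [MeasureTheory.integral_const_mul]
      _ ≤ (‖x‖^n / genGamma (-μ) n) * Bv := by
          refine mul_le_mul_of_nonneg_left ?_ (div_nonneg (by positivity) (hγpos n).le)
          rw [← hwint_val]
          refine integral_mono_of_nonneg (Filter.Eventually.of_forall fun t => abs_nonneg _)
            hwInt ?_
          filter_upwards [ae_restrict_mem measurableSet_Ioc] with t ht
          have h1 : |fn n t| = |t|^n * w t := by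
            rw [hfn]
            simp only
            rw [abs_mul, abs_pow, abs_of_nonneg (hwnonneg t ht)]
          rw [h1]
          have h2 : |t| ≤ 1 := abs_le.mpr ⟨ht.1.le, ht.2⟩
          have h3 : |t|^n ≤ 1 := pow_le_one₀ (abs_nonneg t) h2
          nlinarith [hwnonneg t ht]
  -- summability
  have hsummable : Summable fun n => ∫ t in Ioc (-1:ℝ) 1, ‖g n t‖ := by
    have hbase : Summable fun n : ℕ => Bv * ((‖x‖/(1-2*μ))^n / n !) :=
      (Real.summable_pow_div_factorial (‖x‖/(1-2*μ))).mul_left Bv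
    refine Summable.of_nonneg_of_le (fun n => integral_nonneg fun t => norm_nonneg _)
      (fun n => le_trans (hnorm n) ?_) hbase
    have h12 : (0:ℝ) < 1 - 2*μ := by linarith
    have hge := genGamma_ge hμ1 hμ0 n
    have hden : (0:ℝ) < (1-2*μ)^n * n ! := by positivity
    have : ‖x‖^n / genGamma (-μ) n ≤ ‖x‖^n / ((1-2*μ)^n * n !) :=
      div_le_div_of_nonneg_left (by positivity) hden hge
    calc ‖x‖^n / genGamma (-μ) n * Bv ≤ ‖x‖^n / ((1-2*μ)^n * n !) * Bv :=
          mul_le_mul_of_nonneg_right this hBvpos.le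
      _ = Bv * ((‖x‖/(1-2*μ))^n / n !) := by
          rw [div_pow]
          field_simp
  -- the swap
  have hswap := MeasureTheory.integral_tsum_of_summable_integral_norm hInt hsummable
  -- value of each integral
  have hval : ∀ n, (∫ t in Ioc (-1:ℝ) 1, g n t) = (Bv:ℂ) * (x^n / n !) := by
    intro n
    rw [hgdef]
    simp only
    rw [MeasureTheory.integral_const_mul]
    have intOfReal : (∫ a in Ioc (-1:ℝ) 1, ((fn n a : ℝ):ℂ)) = (((∫ a in Ioc (-1:ℝ) 1, fn n a) : ℝ) : ℂ) :=
      _root_.integral_ofReal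
    rw [intOfReal]
    have hm := moment hμ0 hμ1 n
    rw [intervalIntegral.integral_of_le hm11] at hm
    have : (∫ t in Ioc (-1:ℝ) 1, fn n t) = Bv * genGamma (-μ) n / n ! := hm
    rw [this]
    have hfne : ((n ! : ℕ):ℂ) ≠ 0 := by
      exact_mod_cast (Nat.factorial_pos n).ne'
    push_cast
    field_simp [hγne n]
  -- final computation
  have hexp : Complex.exp x = ∑' n : ℕ, x^n / n ! := by
    rw [Complex.exp_eq_exp_ℂ, NormedSpace.exp_eq_tsum_div]
  have hfinal : (∫ t in (-1:ℝ)..1, genExp (-μ) (x * t) * ((w t : ℝ) : ℂ)) = (Bv:ℂ) * Complex.exp x := by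
    rw [intervalIntegral.integral_of_le hm11]
    calc (∫ t in Ioc (-1:ℝ) 1, genExp (-μ) (x * t) * ((w t : ℝ) : ℂ))
        = ∫ t in Ioc (-1:ℝ) 1, ∑' n, g n t := by
          refine integral_congr_ae (Filter.Eventually.of_forall fun t => hpt t)
      _ = ∑' n, ∫ t in Ioc (-1:ℝ) 1, g n t := hswap.symm
      _ = ∑' n, (Bv:ℂ) * (x^n / n !) := by
          exact tsum_congr hval
      _ = (Bv:ℂ) * Complex.exp x := by
          rw [tsum_mul_left, hexp]
  rw [hfinal]
  have hBvne : ((Bv:ℝ):ℂ) ≠ 0 := by exact_mod_cast hBvpos.ne'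
  push_cast
  field_simp
end

section
/- Let μ > −1/2 be real and x, z ∈ ℂ. Then the series Σ_{n=0}^∞ H_n^μ(x) z^n/n! converges and exp(−z²) · e_μ(2xz) = Σ_{n=0}^∞ H_n^μ(x) z^n/n! (generating function for the generalized Hermite polynomials). -/
open MeasureTheory
open scoped BigOperators Nat

lemma genGamma_factor_pos (μ : ℝ) (hμ : -(1/2) < μ) (n : ℕ) :
    0 < (n : ℝ) + 1 + 2 * μ * (if (n + 1) % 2 = 1 then (1 : ℝ) else 0) := by
  by_cases h : (n + 1) % 2 = 1 <;> simp [h] <;> nlinarith [Nat.cast_nonneg (α := ℝ) n]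

lemma genGamma_pos_s5 (μ : ℝ) (hμ : -(1/2) < μ) : ∀ n, 0 < genGamma μ n := by
  intro n
  induction n with
  | zero => norm_num [genGamma]
  | succ n ih =>
    rw [genGamma]
    exact mul_pos (genGamma_factor_pos μ hμ n) ih

lemma genGamma_lower (μ : ℝ) (hμ : -(1/2) < μ) (n : ℕ) :
    (min 1 (1 + 2*μ)) ^ n * (n ! : ℝ) ≤ genGamma μ n := by
  set c : ℝ := min 1 (1 + 2*μ) with hc
  have hc0 : 0 < c := lt_min one_pos (by linarith)
  have hc1 : c ≤ 1 := min_le_left _ _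
  induction n with
  | zero => simp [genGamma]
  | succ n ih =>
    rw [genGamma]
    have hfac : c * ((n : ℝ) + 1) ≤ (n : ℝ) + 1 + 2 * μ * (if (n + 1) % 2 = 1 then (1 : ℝ) else 0) := by
      by_cases h : (n + 1) % 2 = 1
      · simp only [h, if_pos, mul_one]
        rcases le_or_gt 0 μ with hμ0 | hμ0
        · nlinarith [Nat.cast_nonneg (α := ℝ) n]
        · have : c ≤ 1 + 2*μ := min_le_right _ _
          nlinarith [Nat.cast_nonneg (α := ℝ) n]
      · simp only [h, if_neg, not_false_iff, mul_zero, add_zero]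
        nlinarith [Nat.cast_nonneg (α := ℝ) n]
    calc c ^ (n+1) * ((n+1)! : ℝ)
        = (c * ((n:ℝ)+1)) * (c ^ n * (n ! : ℝ)) := by
          push_cast [Nat.factorial_succ, pow_succ]; ring
      _ ≤ ((n : ℝ) + 1 + 2 * μ * (if (n + 1) % 2 = 1 then (1 : ℝ) else 0)) * genGamma μ n := by
          apply mul_le_mul hfac ih (by positivity)
          exact le_trans (by positivity) hfac

/-- Generating function for the generalized Hermite polynomials:
for `μ > -1/2` and `x, z ∈ ℂ`, the series `Σ_n H_n^μ(x) z^n/n!` converges to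
`exp(-z²) e_μ(2xz)`. -/
theorem genHermite_generating_function (μ : ℝ) (hμ : -(1/2) < μ) (x z : ℂ) :
    HasSum (fun n : ℕ => genHermite μ n x * z ^ n / (n ! : ℂ))
      (Complex.exp (-z ^ 2) * genExp μ (2 * x * z)) := by
  set w : ℂ := 2 * x * z with hw
  set c : ℝ := min 1 (1 + 2*μ) with hc
  have hc0 : 0 < c := lt_min one_pos (by linarith)
  set F : ℕ → ℂ := fun j => if Even j then (-z^2)^(j/2) / ((j/2)! : ℂ) else 0 with hF
  set G : ℕ → ℂ := fun m => w ^ m / ((genGamma μ m : ℝ) : ℂ) with hG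
  have hinj : Function.Injective (fun k : ℕ => 2 * k) :=
    fun a b h => Nat.eq_of_mul_eq_mul_left (by norm_num) h
  have hvanish : ∀ j, j ∉ Set.range (fun k : ℕ => 2 * k) → F j = 0 := by
    intro j hj
    have : ¬ Even j := by
      intro ⟨r, hr⟩
      exact hj ⟨r, by show 2 * r = j; omega⟩
    simp [hF, this]
  have hF2 : (fun k : ℕ => F (2 * k)) = fun k : ℕ => (-z^2)^k / (k ! : ℂ) := by
    funext k
    have he : Even (2 * k) := ⟨k, by ring⟩
    simp [hF, he, Nat.mul_div_cancel_left k (by norm_num : 0 < 2)]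
  -- HasSum F (exp (-z^2))
  have hexp : HasSum (fun k : ℕ => (-z^2)^k / (k ! : ℂ)) (Complex.exp (-z^2)) := by
    rw [Complex.exp_eq_exp_ℂ]
    exact NormedSpace.expSeries_div_hasSum_exp (-z^2)
  have hFsum : HasSum F (Complex.exp (-z^2)) := by
    rw [← hinj.hasSum_iff hvanish]
    have heq : (F ∘ fun k : ℕ => 2 * k) = fun k : ℕ => (-z^2)^k / (k ! : ℂ) := by
      funext k; exact congrFun hF2 k
    rw [heq]; exact hexp
  -- norm summability of F
  have hFnorm : Summable fun j => ‖F j‖ := by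
    rw [← hinj.summable_iff (fun j hj => by rw [hvanish j hj, norm_zero])]
    have heq : ((fun j => ‖F j‖) ∘ fun k : ℕ => 2 * k)
        = fun k : ℕ => (‖z‖^2)^k / (k ! : ℝ) := by
      funext k
      show ‖F (2 * k)‖ = _
      rw [congrFun hF2 k]
      simp [norm_div, norm_pow]
    rw [heq]
    exact Real.summable_pow_div_factorial _
  -- norm summability of G
  have hGnorm : Summable fun m => ‖G m‖ := by
    refine Summable.of_nonneg_of_le (fun m => norm_nonneg _) (fun m => ?_)
      (Real.summable_pow_div_factorial (‖w‖ / c))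
    have hγ : 0 < genGamma μ m := genGamma_pos_s5 μ hμ m
    have hlow := genGamma_lower μ hμ m
    rw [hG]
    simp only [norm_div, norm_pow, Complex.norm_real, Real.norm_eq_abs, abs_of_pos hγ]
    rw [div_pow, div_div]
    exact div_le_div_of_nonneg_left (by positivity) (by positivity) hlow
  have hGsum : HasSum G (genExp μ w) := by
    rw [genExp]; exact (hGnorm.of_norm).hasSum
  -- Cauchy product
  have hkey := tsum_mul_tsum_eq_tsum_sum_range_of_summable_norm hFnorm hGnorm
  have hssum : Summable fun n => ∑ k ∈ Finset.range (n+1), F k * G (n - k) :=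
    (summable_norm_sum_mul_range_of_summable_norm hFnorm hGnorm).of_norm
  have hprod : HasSum (fun n => ∑ k ∈ Finset.range (n+1), F k * G (n - k))
      (Complex.exp (-z^2) * genExp μ w) := by
    have := hssum.hasSum
    rwa [← hkey, hFsum.tsum_eq, hGsum.tsum_eq] at this
  -- identify terms
  have hterm : ∀ n : ℕ, ∑ k ∈ Finset.range (n+1), F k * G (n - k)
      = genHermite μ n x * z ^ n / (n ! : ℂ) := by
    intro n
    have hsub : (Finset.range (n/2 + 1)).image (fun k => 2 * k) ⊆ Finset.range (n+1) := by
      intro j hj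
      simp only [Finset.mem_image, Finset.mem_range] at hj ⊢
      obtain ⟨k, hk, rfl⟩ := hj
      omega
    have h1 : ∑ j ∈ Finset.range (n+1), F j * G (n - j)
        = ∑ j ∈ (Finset.range (n/2 + 1)).image (fun k => 2 * k), F j * G (n - j) := by
      apply (Finset.sum_subset hsub ?_).symm
      intro j hj hj'
      simp only [Finset.mem_image, Finset.mem_range] at hj hj'
      have hodd : ¬ Even j := by
        intro ⟨r, hr⟩
        exact hj' ⟨r, by omega, by omega⟩
      simp [hF, hodd]
    rw [h1, Finset.sum_image (fun a _ b _ h => hinj h)]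
    have hne : (n ! : ℂ) ≠ 0 := by exact_mod_cast Nat.factorial_ne_zero n
    rw [genHermite, mul_comm ((n ! : ℂ)) _, mul_div_assoc, mul_assoc, ← mul_div_assoc,
      mul_div_cancel_left₀ _ hne, Finset.sum_mul]
    apply Finset.sum_congr rfl
    intro k hk
    simp only [Finset.mem_range] at hk
    have h2k : 2 * k ≤ n := by omega
    have he : Even (2 * k) := ⟨k, by ring⟩
    simp only [hF, hG, he, if_pos, Nat.mul_div_cancel_left k (by norm_num : 0 < 2)]
    have hzpow : w ^ (n - 2*k) = (2*x) ^ (n - 2*k) * z ^ (n - 2*k) := by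
      rw [hw, mul_pow]
    have hz2 : (-z^2)^k = (-1)^k * z^(2*k) := by
      rw [neg_pow, pow_mul]
    rw [hzpow, hz2]
    have hzz : z ^ (2*k) * z ^ (n - 2*k) = z ^ n := by
      rw [← pow_add, Nat.add_sub_cancel' h2k]
    field_simp
    ring_nf
    rw [← hzz]
    ring
  simpa only [funext hterm] using hprod
end
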